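/- Let N be an acyclic simple graph. Then every finite acyclic graph F admits an embedding into N whose image is a union of connected components of N, if and only if every finite tree is isomorphic to infinitely many distinct connected components of N. -/

import Mathlib

open SimpleGraph

section helpers
variable {V : Type*} {G : SimpleGraph V}

lemma supp_subset_of_closed {s : Set V} (hs : ∀ ⦃v w⦄, v ∈ s → G.Adj v w → w ∈ s)
    {u : V} (hu : u ∈ s) : (G.connectedComponentMk u).supp ⊆ s := by
  intro v hv
  rw [ConnectedComponent.mem_supp_iff, ConnectedComponent.eq] at hv
  obtain ⟨p⟩ := hv.symm
  clear hv
  induction p with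
  | nil => exact hu
  | cons h q ih => exact ih (hs hu h)

lemma reachable_induce_of_closed {s : Set V} (hs : ∀ ⦃v w⦄, v ∈ s → G.Adj v w → w ∈ s)
    {u v : V} (hu : u ∈ s) (hv : v ∈ s) (h : G.Reachable u v) :
    (G.induce s).Reachable ⟨u, hu⟩ ⟨v, hv⟩ := by
  obtain ⟨p⟩ := h
  induction p with
  | nil => exact Reachable.refl _
  | @cons a b c h q ih =>
      have hb : b ∈ s := hs hu h
      exact (Adj.reachable (by exact h : (G.induce s).Adj ⟨a, hu⟩ ⟨b, hb⟩)).trans (ih hb hv)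

lemma induce_supp_connected (K : G.ConnectedComponent) : (G.induce K.supp).Connected := by
  have hcl : ∀ ⦃v w⦄, v ∈ K.supp → G.Adj v w → w ∈ K.supp := by
    intro v w hv hadj
    rw [ConnectedComponent.mem_supp_iff] at hv ⊢
    rw [← hv]
    exact (ConnectedComponent.connectedComponentMk_eq_of_adj hadj).symm
  obtain ⟨u, hu⟩ := K.exists_rep
  haveI : Nonempty K.supp := ⟨⟨u, hu⟩⟩
  refine ⟨?_⟩
  intro ⟨a, ha⟩ ⟨b, hb⟩
  have hra : G.Reachable a b := by
    have ha' := ha; have hb' := hb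
    rw [ConnectedComponent.mem_supp_iff] at ha' hb'
    rw [← ConnectedComponent.eq, ha', hb']
  exact reachable_induce_of_closed hcl ha hb hra

lemma induce_acyclic (hG : G.IsAcyclic) (s : Set V) : (G.induce s).IsAcyclic := by
  intro v p hp
  have : Function.Injective (fun x : s => (x : V)) := Subtype.val_injective
  exact hG ((p.map ⟨Subtype.val, fun h => h⟩).copy rfl rfl) (hp.map this)

end helpers

/-- `k` disjoint copies of a graph `T`. -/
def copiesGraph {n k : ℕ} (T : SimpleGraph (Fin n)) : SimpleGraph (Fin n × Fin k) where
  Adj p q := p.2 = q.2 ∧ T.Adj p.1 q.1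
  symm := by constructor; intro p q ⟨h1, h2⟩; exact ⟨h1.symm, h2.symm⟩
  loopless := by constructor; intro p ⟨_, h⟩; exact T.loopless.irrefl _ h

lemma copiesGraph_snd_eq {n k : ℕ} {T : SimpleGraph (Fin n)} {x y : Fin n × Fin k}
    (p : (copiesGraph T).Walk x y) : ∀ z ∈ p.support, z.2 = x.2 := by
  induction p with
  | nil => intro z hz; simp at hz; rw [hz]
  | @cons a b c h q ih =>
      intro z hz
      rw [SimpleGraph.Walk.support_cons] at hz
      rcases List.mem_cons.mp hz with hz | hz
      · rw [hz]
      · rw [ih z hz, ← h.1]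

lemma walk_injOn_cycle_map' {V W : Type*} {G : SimpleGraph V} {G' : SimpleGraph W}
    (f : G →g G') {u : V} {p : G.Walk u u} (hp : p.IsCycle)
    (hinj : Set.InjOn f {v | v ∈ p.support}) : (p.map f).IsCycle := by
  have hedges : (p.map f).edges.Nodup := by
    rw [SimpleGraph.Walk.edges_map]
    refine List.Nodup.map_on ?_ hp.edges_nodup
    intro e1 he1 e2 he2 heq
    induction e1 with
    | _ a b =>
    induction e2 with
    | _ c d =>
    have ha := p.fst_mem_support_of_mem_edges he1
    have hb := p.snd_mem_support_of_mem_edges he1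
    have hc := p.fst_mem_support_of_mem_edges he2
    have hd := p.snd_mem_support_of_mem_edges he2
    rw [Sym2.map_pair_eq, Sym2.map_pair_eq, Sym2.eq_iff] at heq
    rcases heq with ⟨h1, h2⟩ | ⟨h1, h2⟩
    · rw [hinj ha hc h1, hinj hb hd h2]
    · rw [hinj ha hd h1, hinj hb hc h2, Sym2.eq_swap]
  refine ⟨⟨⟨hedges⟩, ?_⟩, ?_⟩
  · simpa [SimpleGraph.Walk.map_eq_nil_iff] using hp.ne_nil
  · rw [SimpleGraph.Walk.support_map, ← List.map_tail]
    refine List.Nodup.map_on ?_ hp.support_nodup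
    intro x hx y hy
    exact hinj (List.mem_of_mem_tail hx) (List.mem_of_mem_tail hy)

lemma copiesGraph_acyclic {n k : ℕ} {T : SimpleGraph (Fin n)} (hT : T.IsAcyclic) :
    (copiesGraph (k := k) T).IsAcyclic := by
  intro v p hp
  have hsnd := copiesGraph_snd_eq p
  let hom : copiesGraph (k := k) T →g T := ⟨Prod.fst, fun h => h.2⟩
  refine hT (p.map hom) (walk_injOn_cycle_map' hom hp ?_)
  intro x hx y hy hxy
  exact Prod.ext hxy ((hsnd x hx).trans (hsnd y hy).symm)

lemma exists_inj_choice {ι α : Type*} (s : Finset ι) (S : ι → Set α)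
    (hS : ∀ i, (S i).Infinite) :
    ∃ g : ι → α, Set.InjOn g s ∧ ∀ i ∈ s, g i ∈ S i := by
  classical
  induction s using Finset.induction with
  | empty => exact ⟨fun i => (hS i).nonempty.choose, by simp, by simp⟩
  | @insert a s ha ih =>
      obtain ⟨g, hg1, hg2⟩ := ih
      have : (S a \ g '' s).Infinite := (hS a).diff ((s.finite_toSet.image g))
      obtain ⟨x, hx⟩ := this.nonempty
      refine ⟨Function.update g a x, ?_, ?_⟩
      · intro i hi j hj hij
        simp only [Finset.coe_insert, Set.mem_insert_iff] at hi hj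
        rcases hi with rfl | hi <;> rcases hj with rfl | hj
        · rfl
        · rw [Function.update_self, Function.update_of_ne (fun h : j = i => ha (h ▸ hj))] at hij
          exact absurd (hij ▸ Set.mem_image_of_mem g hj : x ∈ g '' s) hx.2
        · rw [Function.update_self, Function.update_of_ne (fun h : i = j => ha (h ▸ hi))] at hij
          exact absurd (hij ▸ Set.mem_image_of_mem g hi : x ∈ g '' s) hx.2
        · rw [Function.update_of_ne (fun h : i = a => ha (h ▸ hi)),
            Function.update_of_ne (fun h : j = a => ha (h ▸ hj))] at hij
          exact hg1 hi hj hij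
      · intro i hi
        rcases Finset.mem_insert.mp hi with rfl | hi
        · rw [Function.update_self]; exact hx.1
        · rw [Function.update_of_ne (fun h : i = a => ha (h ▸ hi))]; exact hg2 i hi

/-- Let `N` be an acyclic simple graph.  Every finite acyclic graph admits an embedding
into `N` whose image is a union of connected components of `N`, if and only if every
finite tree (nonempty connected acyclic finite graph) is isomorphic to infinitely many
distinct connected components of `N`. -/
theorem stmt_13 {V : Type*} (N : SimpleGraph V) (hN : N.IsAcyclic) :
    (∀ (n : ℕ) (F : SimpleGraph (Fin n)), F.IsAcyclic →
      ∃ f : Fin n → V, Function.Injective f ∧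
        (∀ a b : Fin n, F.Adj a b ↔ N.Adj (f a) (f b)) ∧
        -- the image is a union of connected components of N
        (∀ v w : V, N.Adj v w → (v ∈ Set.range f ↔ w ∈ Set.range f))) ↔
    (∀ (n : ℕ) (T : SimpleGraph (Fin n)), 0 < n → T.Connected → T.IsAcyclic →
      {c : N.ConnectedComponent |
        Nonempty (T ≃g (N.induce (c.supp)))}.Infinite) := by
  classical
  constructor
  · -- forward direction
    intro h n T hn hconn hT
    by_contra hinf
    rw [Set.not_infinite] at hinf
    set m := hinf.toFinset.card with hm
    set k := m + 1 with hk
    let e : Fin n × Fin k ≃ Fin (n * k) := finProdFinEquiv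
    set C := copiesGraph (k := k) T with hC
    set F : SimpleGraph (Fin (n * k)) := C.comap e.symm with hFdef
    have hFacy : F.IsAcyclic := by
      intro v p hp
      exact copiesGraph_acyclic hT (p.map ⟨e.symm, fun hadj => hadj⟩)
        (hp.map (f := ⟨e.symm, fun hadj => hadj⟩) e.symm.injective)
    obtain ⟨f, hfinj, hfadj, hfcl⟩ := h (n * k) F hFacy
    set g : Fin n → Fin k → V := fun a i => f (e (a, i)) with hg
    have hadj' : ∀ (a b : Fin n) (i j : Fin k),
        N.Adj (g a i) (g b j) ↔ (i = j ∧ T.Adj a b) := by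
      intro a b i j
      rw [← hfadj]
      show C.Adj (e.symm (e (a, i))) (e.symm (e (b, j))) ↔ _
      rw [Equiv.symm_apply_apply, Equiv.symm_apply_apply]
      exact Iff.rfl
    have hginj : ∀ {a i b j}, g a i = g b j → (a, i) = (b, j) :=
      fun hab => e.injective (hfinj hab)
    set v0 : Fin n := ⟨0, hn⟩ with hv0
    set c : Fin k → N.ConnectedComponent := fun i => N.connectedComponentMk (g v0 i) with hc
    have hsupp : ∀ i, (c i).supp = Set.range (fun a => g a i) := by
      intro i
      apply Set.Subset.antisymm
      · have hcl : ∀ ⦃v w : V⦄, v ∈ Set.range (fun a => g a i) → N.Adj v w →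
            w ∈ Set.range (fun a => g a i) := by
          rintro v w ⟨a, rfl⟩ hadj
          have hw : w ∈ Set.range f := (hfcl _ w hadj).mp ⟨e (a, i), rfl⟩
          obtain ⟨z, rfl⟩ := hw
          obtain ⟨⟨b, j⟩, rfl⟩ := e.surjective z
          have hij := (hadj' a b i j).mp hadj
          exact ⟨b, by rw [← hij.1]⟩
        exact supp_subset_of_closed hcl ⟨v0, rfl⟩
      · rintro v ⟨a, rfl⟩
        rw [ConnectedComponent.mem_supp_iff]
        have hr : T.Reachable a v0 := hconn.preconnected a v0
        exact ConnectedComponent.sound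
          (hr.map ⟨fun x => g x i, fun {x y} hxy => (hadj' x y i i).mpr ⟨rfl, hxy⟩⟩)
    have hiso : ∀ i, c i ∈ {c : N.ConnectedComponent |
        Nonempty (T ≃g (N.induce (c.supp)))} := by
      intro i
      have hto : ∀ a : Fin n, g a i ∈ (c i).supp := by
        rw [hsupp]; exact fun a => ⟨a, rfl⟩
      refine ⟨⟨Equiv.ofBijective (fun a => ⟨g a i, hto a⟩) ⟨?_, ?_⟩, ?_⟩⟩
      · intro a b hab
        exact (Prod.ext_iff.mp (hginj (congrArg Subtype.val hab))).1
      · rintro ⟨v, hv⟩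
        rw [hsupp i] at hv
        obtain ⟨a, ha⟩ := hv
        exact ⟨a, Subtype.ext ha⟩
      · intro a b
        rw [comap_adj]
        show N.Adj (g a i) (g b i) ↔ T.Adj a b
        rw [hadj']
        simp
    have hcinj : Function.Injective c := by
      intro i j hij
      have hmem : g v0 j ∈ (c i).supp := by
        rw [hij]; exact rfl
      rw [hsupp i] at hmem
      obtain ⟨a, ha⟩ := hmem
      have h2 := congrArg Prod.snd (hginj ha)
      simp only [] at h2
      exact h2
    have hle : k ≤ m := by
      have hcard : (Finset.univ : Finset (Fin k)).card ≤ hinf.toFinset.card :=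
        Finset.card_le_card_of_injOn c
          (fun i _ => (Set.Finite.mem_toFinset hinf).mpr (hiso i))
          (fun a _ b _ hab => hcinj hab)
      simpa using hcard
    omega
  · -- backward direction
    intro h n F hF
    haveI : Finite F.ConnectedComponent :=
      Finite.of_surjective F.connectedComponentMk (fun c => c.exists_rep)
    haveI := Fintype.ofFinite F.ConnectedComponent
    set S : F.ConnectedComponent → Set N.ConnectedComponent :=
      fun K => {c | Nonempty ((F.induce K.supp) ≃g (N.induce c.supp))} with hSdef
    have hSinf : ∀ K, (S K).Infinite := by
      intro K
      haveI : Fintype K.supp := Fintype.ofFinite _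
      set m := Fintype.card K.supp with hmdef
      let e : K.supp ≃ Fin m := Fintype.equivFin _
      set T' : SimpleGraph (Fin m) := (F.induce K.supp).comap e.symm with hT'def
      have iso1 : T' ≃g (F.induce K.supp) := ⟨e.symm, Iff.rfl⟩
      have hm : 0 < m := by
        obtain ⟨u, hu⟩ := K.exists_rep
        haveI : Nonempty K.supp := ⟨⟨u, hu⟩⟩
        exact Fintype.card_pos
      have hconn' : T'.Connected :=
        Connected.map iso1.symm.toHom iso1.symm.toEquiv.surjective (induce_supp_connected K)
      have hacy' : T'.IsAcyclic := by
        intro v p hp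
        exact induce_acyclic hF K.supp (p.map iso1.toHom)
          (hp.map (f := iso1.toHom) iso1.toEquiv.injective)
      have := h m T' hm hconn' hacy'
      exact this.mono (fun c hc => hc.elim fun iso2 => ⟨iso1.symm.trans iso2⟩)
    obtain ⟨g, hg1, hg2⟩ := exists_inj_choice Finset.univ S hSinf
    have hginj : Function.Injective g := fun a b hab =>
      hg1 (by simp) (by simp) hab
    have hgS : ∀ K, g K ∈ S K := fun K => hg2 K (Finset.mem_univ K)
    set φ : ∀ K : F.ConnectedComponent, (F.induce K.supp) ≃g (N.induce (g K).supp) :=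
      fun K => (hgS K).some with hφ
    have hmk : ∀ v : Fin n, v ∈ (F.connectedComponentMk v).supp := fun v => rfl
    set f : Fin n → V :=
      fun v => ((φ (F.connectedComponentMk v)) ⟨v, hmk v⟩ : ((g (F.connectedComponentMk v)).supp)).val
      with hfdef
    have f_spec : ∀ (K : F.ConnectedComponent) (a : Fin n) (ha : a ∈ K.supp),
        f a = ((φ K) ⟨a, ha⟩).val := by
      intro K a ha
      have h1 : F.connectedComponentMk a = K := ha
      subst h1
      rfl
    have f_comp : ∀ v, N.connectedComponentMk (f v) = g (F.connectedComponentMk v) :=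
      fun v => ((φ (F.connectedComponentMk v)) ⟨v, hmk v⟩).property
    refine ⟨f, ?_, ?_, ?_⟩
    · intro a b hab
      have hKg : g (F.connectedComponentMk a) = g (F.connectedComponentMk b) := by
        rw [← f_comp a, ← f_comp b, hab]
      have hK : F.connectedComponentMk a = F.connectedComponentMk b := hginj hKg
      have hb : b ∈ (F.connectedComponentMk a).supp := hK.symm
      rw [f_spec _ a rfl, f_spec _ b hb] at hab
      have := (φ (F.connectedComponentMk a)).injective (Subtype.val_injective hab)
      exact congrArg Subtype.val this
    · intro a b
      by_cases hK : F.connectedComponentMk a = F.connectedComponentMk b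
      · have ha : a ∈ (F.connectedComponentMk a).supp := rfl
        have hb : b ∈ (F.connectedComponentMk a).supp := hK.symm
        rw [f_spec _ a ha, f_spec _ b hb]
        constructor
        · intro hadj
          exact (φ (F.connectedComponentMk a)).map_rel_iff.mpr
            (hadj : (F.induce _).Adj ⟨a, ha⟩ ⟨b, hb⟩)
        · intro hadj
          exact (φ (F.connectedComponentMk a)).map_rel_iff.mp
            (hadj : (N.induce _).Adj _ _)
      · constructor
        · intro hadj
          exact absurd (ConnectedComponent.connectedComponentMk_eq_of_adj hadj) hK
        · intro hadj
          have hmkeq : N.connectedComponentMk (f a) = N.connectedComponentMk (f b) :=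
            ConnectedComponent.connectedComponentMk_eq_of_adj hadj
          rw [f_comp, f_comp] at hmkeq
          exact absurd (hginj hmkeq) hK
    · have hrange : ∀ v : V, v ∈ Set.range f ↔ N.connectedComponentMk v ∈ Set.range g := by
        intro v
        constructor
        · rintro ⟨a, rfl⟩
          exact ⟨_, (f_comp a).symm⟩
        · rintro ⟨K, hK⟩
          have hv : v ∈ (g K).supp := hK.symm
          obtain ⟨⟨a, ha⟩, hφa⟩ := (φ K).surjective ⟨v, hv⟩
          refine ⟨a, ?_⟩
          rw [f_spec K a ha, hφa]
      intro v w hadj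
      rw [hrange v, hrange w,
        ConnectedComponent.connectedComponentMk_eq_of_adj hadj]
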